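/- arXiv:1410.3042 — 2 statements merged into one kernel-verified Lean document; each statement's English description precedes it below -/
import Mathlib

section
/- (Lemma) 𝔠 is a subring of ℂ which is closed under complex conjugation: 0, 1 ∈ 𝔠, and for all a, b ∈ 𝔠 one has a + b ∈ 𝔠, −a ∈ 𝔠, ab ∈ 𝔠, and a* ∈ 𝔠. -/
open Complex


/-- The set 𝔠 of compass-constructable points in the plane ℂ: the smallest set
containing 0 and 1 and closed under taking intersection points of two distinct
circles whose centers and radius-defining points are constructable. -/
inductive Compass : ℂ → Prop
  | zero : Compass 0
  | one : Compass 1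
  | circle_circle (a b c d z : ℂ) :
      Compass a → Compass b → Compass c → Compass d →
      ‖z - a‖ = ‖b - a‖ →
      ‖z - c‖ = ‖d - c‖ →
      {w : ℂ | ‖w - a‖ = ‖b - a‖} ≠
        {w : ℂ | ‖w - c‖ = ‖d - c‖} →
      Compass z


lemma absEq {z w : ℂ} (h : normSq z = normSq w) : ‖z‖ = ‖w‖ := by
  rw [Complex.norm_def, Complex.norm_def, h]

lemma circles_ne {a c : ℂ} (b d : ℂ) (h : a ≠ c) :
    {w : ℂ | ‖w - a‖ = ‖b - a‖} ≠
      {w : ℂ | ‖w - c‖ = ‖d - c‖} := by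
  intro heq
  set r₁ : ℝ := ‖b - a‖ with hr₁
  set r₂ : ℝ := ‖d - c‖ with hr₂
  have hr₁0 : 0 ≤ r₁ := norm_nonneg _
  have hr₂0 : 0 ≤ r₂ := norm_nonneg _
  have mem := Set.ext_iff.1 heq
  simp only [Set.mem_setOf_eq] at mem
  have h1 : ‖(a + r₁) - c‖ = r₂ := by
    refine (mem _).1 ?_; simp [Complex.norm_of_nonneg hr₁0, hr₁0]
  have h2 : ‖(a - r₁) - c‖ = r₂ := by
    refine (mem _).1 ?_; simp [Complex.norm_of_nonneg hr₁0, hr₁0]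
  have h3 : ‖(a + r₁ * I) - c‖ = r₂ := by
    refine (mem _).1 ?_
    simp only [add_sub_cancel_left]
    rw [norm_mul, Complex.norm_I, mul_one, Complex.norm_of_nonneg hr₁0]
  -- pass to normSq
  have n1 : normSq ((a + r₁) - c) = r₂ ^ 2 := by
    rw [← Complex.sq_norm, h1]
  have n2 : normSq ((a - r₁) - c) = r₂ ^ 2 := by
    rw [← Complex.sq_norm, h2]
  have n3 : normSq ((a + r₁ * I) - c) = r₂ ^ 2 := by
    rw [← Complex.sq_norm, h3]
  simp only [Complex.normSq_apply, Complex.sub_re, Complex.sub_im, Complex.add_re,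
    Complex.add_im, Complex.ofReal_re, Complex.ofReal_im, Complex.mul_re, Complex.mul_im,
    Complex.I_re, Complex.I_im] at n1 n2 n3
  have hre : r₁ * (a.re - c.re) = 0 := by nlinarith [n1, n2]
  have him : r₁ * (a.im - c.im) = 0 := by nlinarith [n1, n3]
  by_cases hr : r₁ = 0
  · -- circle 1 is the single point {a}; get a = c + r₂ and a = c - r₂
    have m1 : ‖(c + r₂) - a‖ = r₁ := by
      refine (mem _).2 ?_; simp [Complex.norm_of_nonneg hr₂0, hr₂0]
    have m2 : ‖(c - r₂) - a‖ = r₁ := by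
      refine (mem _).2 ?_; simp [Complex.norm_of_nonneg hr₂0, hr₂0]
    rw [hr, norm_eq_zero, sub_eq_zero] at m1 m2
    apply h
    have : (r₂ : ℂ) = 0 := by linear_combination (m1 - m2)/2
    rw [← m1, this, add_zero]
  · apply h
    have e1 : a.re - c.re = 0 := by
      rcases mul_eq_zero.1 hre with h' | h'
      · exact absurd h' hr
      · exact h'
    have e2 : a.im - c.im = 0 := by
      rcases mul_eq_zero.1 him with h' | h'
      · exact absurd h' hr
      · exact h'
    exact Complex.ext (by linarith) (by linarith)

noncomputable def ω : ℂ := ((1/2 : ℝ) : ℂ) + ((Real.sqrt 3 / 2 : ℝ) : ℂ) * I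

lemma sqrt3_sq : ((Real.sqrt 3 : ℝ) : ℂ) ^ 2 = 3 := by
  norm_cast
  rw [Real.sq_sqrt]; norm_num

lemma omega_sq : ω ^ 2 = ω - 1 := by
  unfold ω
  have h3 : ((Real.sqrt 3 : ℝ) : ℂ) ^ 2 = 3 := sqrt3_sq
  have hI : (I : ℂ) ^ 2 = -1 := Complex.I_sq
  push_cast
  linear_combination (I^2/4) * h3 + (3/4 : ℂ) * hI

lemma normSq_omega : normSq ω = 1 := by
  unfold ω
  rw [Complex.normSq_add_mul_I]
  have h := Real.sq_sqrt (by norm_num : (0:ℝ) ≤ 3)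
  nlinarith [h]

lemma normSq_one_sub_omega : normSq (1 - ω) = 1 := by
  have : (1 : ℂ) - ω = ((1/2 : ℝ) : ℂ) + ((-(Real.sqrt 3 / 2) : ℝ) : ℂ) * I := by
    unfold ω; push_cast; ring
  rw [this, Complex.normSq_add_mul_I]
  have h := Real.sq_sqrt (by norm_num : (0:ℝ) ≤ 3)
  nlinarith [h]

lemma Compass.step {a b c d : ℂ} (ha : Compass a) (hb : Compass b) (hc : Compass c)
    (hd : Compass d) (hne : a ≠ c) {z : ℂ}
    (h1 : ‖z - a‖ = ‖b - a‖)
    (h2 : ‖z - c‖ = ‖d - c‖) : Compass z :=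
  Compass.circle_circle a b c d z ha hb hc hd h1 h2 (circles_ne b d hne)

lemma Compass.rotP {p x : ℂ} (hp : Compass p) (hx : Compass x) :
    Compass (p + (x - p) * ω) := by
  by_cases h : p = x
  · subst h; simpa using hp
  · refine Compass.step hp hx hx hp h ?_ ?_
    · have e : p + (x - p) * ω - p = (x - p) * ω := by ring
      rw [e]; exact absEq (by rw [Complex.normSq_mul, normSq_omega, mul_one])
    · have e : p + (x - p) * ω - x = (p - x) * (1 - ω) := by ring
      rw [e]; exact absEq (by rw [Complex.normSq_mul, normSq_one_sub_omega, mul_one])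

lemma Compass.rotM {p x : ℂ} (hp : Compass p) (hx : Compass x) :
    Compass (p + (x - p) * (1 - ω)) := by
  by_cases h : p = x
  · subst h; simpa using hp
  · refine Compass.step hp hx hx hp h ?_ ?_
    · have e : p + (x - p) * (1 - ω) - p = (x - p) * (1 - ω) := by ring
      rw [e]; exact absEq (by rw [Complex.normSq_mul, normSq_one_sub_omega, mul_one])
    · have e : p + (x - p) * (1 - ω) - x = (p - x) * ω := by ring
      rw [e]; exact absEq (by rw [Complex.normSq_mul, normSq_omega, mul_one])

lemma Compass.refl {a b : ℂ} (ha : Compass a) (hb : Compass b) :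
    Compass (2 * a - b) := by
  have h1 := ha.rotP hb
  have h2 := ha.rotP h1
  have h3 := ha.rotP h2
  have e : a + (a + (a + (b - a) * ω - a) * ω - a) * ω = 2 * a - b := by
    linear_combination (b - a) * (ω + 1) * omega_sq
  rwa [e] at h3

lemma Compass.neg {a : ℂ} (ha : Compass a) : Compass (-a) := by
  have := Compass.zero.refl ha
  rwa [mul_zero, zero_sub] at this

/-- compass equivalence: a point at distance |c - b| from a. -/
lemma Compass.transfer {a b c : ℂ} (ha : Compass a) (hb : Compass b) (hc : Compass c) :
    ∃ e : ℂ, Compass e ∧ e - a = (1 - ω) * (c - b) := by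
  refine ⟨_, (ha.rotP hb).rotM hc, ?_⟩
  linear_combination (b - a) * omega_sq

lemma Compass.translate {z c d : ℂ} (hz : Compass z) (hc : Compass c) (hd : Compass d) :
    Compass (z + (d - c)) := by
  by_cases h : z = d
  · subst h; have := hd.refl hc
    rwa [show 2 * z - c = z + (z - c) by ring] at this
  · obtain ⟨e₁, he₁, he₁'⟩ := hz.transfer hc hd
    obtain ⟨e₂, he₂, he₂'⟩ := hd.transfer hc hz
    refine Compass.step hz he₁ hd he₂ h ?_ ?_
    · rw [show z + (d - c) - z = d - c by ring, he₁']
      exact (absEq (by rw [Complex.normSq_mul, normSq_one_sub_omega, one_mul])).symm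
    · rw [show z + (d - c) - d = z - c by ring, he₂']
      exact (absEq (by rw [Complex.normSq_mul, normSq_one_sub_omega, one_mul])).symm

lemma Compass.add {a b : ℂ} (ha : Compass a) (hb : Compass b) : Compass (a + b) := by
  have := ha.translate Compass.zero hb
  rwa [sub_zero] at this

lemma Compass.conj {z : ℂ} (hz : Compass z) : Compass ((starRingEnd ℂ) z) := by
  refine Compass.step Compass.zero hz Compass.one hz (by norm_num) ?_ ?_
  · rw [sub_zero, sub_zero, Complex.norm_conj]
  · rw [show (starRingEnd ℂ) z - 1 = (starRingEnd ℂ) (z - 1) by rw [map_sub, map_one],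
      Complex.norm_conj]

noncomputable def s15 : ℂ := ((Real.sqrt 15 : ℝ) : ℂ)

lemma normSq_s15_aux (a : ℝ) : normSq ((a:ℂ) + s15 * I) = a^2 + 15 := by
  rw [show (a:ℂ) + s15 * I = (a:ℝ) + ((Real.sqrt 15 : ℝ):ℂ) * I by simp [s15],
    Complex.normSq_add_mul_I]
  have := Real.sq_sqrt (by norm_num : (0:ℝ) ≤ 15)
  nlinarith

lemma normSq_s15_aux' (a : ℝ) : normSq ((a:ℂ) - s15 * I) = a^2 + 15 := by
  rw [show (a:ℂ) - s15 * I = (a:ℝ) + ((-Real.sqrt 15 : ℝ):ℂ) * I by simp [s15]; ring,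
    Complex.normSq_add_mul_I]
  have := Real.sq_sqrt (by norm_num : (0:ℝ) ≤ 15)
  nlinarith

lemma s15_ne : s15 ≠ 0 := by
  simp only [s15, ne_eq, Complex.ofReal_eq_zero]
  positivity

lemma Compass.half {z : ℂ} (hz : Compass z) : Compass (z / 2) := by
  by_cases h0 : z = 0
  · subst h0; simpa using hz
  have h2z : Compass (z + z) := hz.add hz
  set q₁ : ℂ := z * (1 + s15 * I) / 4 with hq₁
  set q₂ : ℂ := z * (1 - s15 * I) / 4 with hq₂
  have habs : ∀ a : ℝ, ∀ sgn : Bool, True := fun _ _ => trivial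
  have hq₁C : Compass q₁ := by
    refine Compass.step Compass.zero hz h2z Compass.zero (by simpa [eq_comm, add_self_eq_zero] using h0) ?_ ?_
    · rw [sub_zero, sub_zero]
      refine absEq ?_
      rw [show q₁ = z * ((1 + s15 * I)/4) by rw [hq₁]; ring, Complex.normSq_mul]
      rw [show ((1:ℂ) + s15 * I)/4 = ((1/4:ℝ):ℂ) * (((1:ℝ):ℂ) + s15 * I) by push_cast; ring]
      rw [Complex.normSq_mul, Complex.normSq_ofReal, normSq_s15_aux]
      norm_num
    · refine absEq ?_
      rw [show q₁ - (z + z) = z * (((-7:ℝ):ℂ) + s15 * I) * ((1/4:ℝ):ℂ) by rw [hq₁]; push_cast; ring,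
        show (0:ℂ) - (z + z) = z * ((-2:ℝ):ℂ) by push_cast; ring]
      rw [Complex.normSq_mul, Complex.normSq_mul, normSq_s15_aux, Complex.normSq_ofReal,
        Complex.normSq_mul, Complex.normSq_ofReal]
      ring
  have hq₂C : Compass q₂ := by
    refine Compass.step Compass.zero hz h2z Compass.zero (by simpa [eq_comm, add_self_eq_zero] using h0) ?_ ?_
    · rw [sub_zero, sub_zero]
      refine absEq ?_
      rw [show q₂ = z * (((1:ℝ):ℂ) - s15 * I) * ((1/4:ℝ):ℂ) by rw [hq₂]; push_cast; ring,
        Complex.normSq_mul, Complex.normSq_mul, normSq_s15_aux', Complex.normSq_ofReal]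
      ring
    · refine absEq ?_
      rw [show q₂ - (z + z) = z * (((-7:ℝ):ℂ) - s15 * I) * ((1/4:ℝ):ℂ) by rw [hq₂]; push_cast; ring,
        show (0:ℂ) - (z + z) = z * ((-2:ℝ):ℂ) by push_cast; ring]
      rw [Complex.normSq_mul, Complex.normSq_mul, normSq_s15_aux', Complex.normSq_ofReal,
        Complex.normSq_mul, Complex.normSq_ofReal]
      ring
  have hne : q₁ ≠ q₂ := by
    rw [hq₁, hq₂]
    intro he
    apply h0
    have h' : z * (s15 * I) = 0 := by linear_combination 2 * he
    rcases mul_eq_zero.1 h' with h | h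
    · exact h
    · rcases mul_eq_zero.1 h with h'' | h''
      · exact absurd h'' s15_ne
      · exact absurd h'' Complex.I_ne_zero
  refine Compass.step hq₁C Compass.zero hq₂C Compass.zero hne ?_ ?_
  · refine absEq ?_
    rw [show z/2 - q₁ = z * (((1:ℝ):ℂ) - s15 * I) * ((1/4:ℝ):ℂ) by rw [hq₁]; push_cast; ring,
      show (0:ℂ) - q₁ = z * (((-1:ℝ):ℂ) - s15 * I) * ((1/4:ℝ):ℂ) by rw [hq₁]; push_cast; ring,
      Complex.normSq_mul, Complex.normSq_mul, normSq_s15_aux', Complex.normSq_ofReal,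
      Complex.normSq_mul, Complex.normSq_mul, normSq_s15_aux', Complex.normSq_ofReal]
    ring
  · refine absEq ?_
    rw [show z/2 - q₂ = z * (((1:ℝ):ℂ) + s15 * I) * ((1/4:ℝ):ℂ) by rw [hq₂]; push_cast; ring,
      show (0:ℂ) - q₂ = z * (((-1:ℝ):ℂ) + s15 * I) * ((1/4:ℝ):ℂ) by rw [hq₂]; push_cast; ring,
      Complex.normSq_mul, Complex.normSq_mul, normSq_s15_aux, Complex.normSq_ofReal,
      Complex.normSq_mul, Complex.normSq_mul, normSq_s15_aux, Complex.normSq_ofReal]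
    ring

lemma Compass.inv_big {P : ℂ} (hP : Compass P) (h : 1/2 < ‖P‖) :
    Compass (P * (((Complex.normSq P)⁻¹ : ℝ) : ℂ)) := by
  have hP0 : P ≠ 0 := by
    intro h0; rw [h0] at h; simp at h; linarith
  set p2 : ℝ := Complex.normSq P with hp2def
  have hp2 : 1/4 < p2 := by
    have h1 : ‖P‖ ^ 2 = p2 := Complex.sq_norm P
    nlinarith [norm_nonneg P]
  have hp2pos : 0 < p2 := by linarith
  have hp2ne : p2 ≠ 0 := ne_of_gt hp2pos
  have hp2C : ((p2:ℝ):ℂ) ≠ 0 := by exact_mod_cast hp2ne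
  set r : ℝ := (2*p2)⁻¹ with hrdef
  have hr : r * (2 * p2) = 1 := inv_mul_cancel₀ (by positivity)
  set t : ℝ := Real.sqrt (4 * p2 - 1) with htdef
  have ht : t ^ 2 = 4 * p2 - 1 := Real.sq_sqrt (by linarith)
  have ht0 : 0 < t := Real.sqrt_pos.2 (by linarith)
  set q₁ : ℂ := P * (((2*p2)⁻¹ : ℝ) : ℂ) * (((1:ℝ):ℂ) + ((t:ℝ):ℂ) * I) with hq₁
  set q₂ : ℂ := P * (((2*p2)⁻¹ : ℝ) : ℂ) * (((1:ℝ):ℂ) + ((-t:ℝ):ℂ) * I) with hq₂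
  have nq : ∀ s : ℝ, Complex.normSq (P * (((2*p2)⁻¹ : ℝ) : ℂ) * (((1:ℝ):ℂ) + ((s:ℝ):ℂ) * I))
      = p2 * ((2*p2)⁻¹)^2 * (1 + s^2) := by
    intro s
    rw [Complex.normSq_mul, Complex.normSq_mul, Complex.normSq_ofReal,
      Complex.normSq_add_mul_I]
    ring
  have hq₁abs : ‖q₁ - 0‖ = ‖(1:ℂ) - 0‖ := by
    refine absEq ?_
    rw [sub_zero, sub_zero, hq₁, nq t, Complex.normSq_one]
    linear_combination (p2*r^2) * ht + (2*p2*r + 1) * hr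
  have hq₂abs : ‖q₂ - 0‖ = ‖(1:ℂ) - 0‖ := by
    refine absEq ?_
    rw [sub_zero, sub_zero, hq₂, nq (-t), Complex.normSq_one]
    linear_combination (p2*r^2) * ht + (2*p2*r + 1) * hr
  have hq₁C : Compass q₁ := by
    refine Compass.step Compass.zero Compass.one hP Compass.zero hP0.symm hq₁abs ?_
    refine absEq ?_
    rw [show q₁ - P = P * (((2*p2)⁻¹ : ℝ) : ℂ) * (((1 - 2*p2 : ℝ):ℂ) + ((t:ℝ):ℂ) * I) by
      rw [hq₁]; push_cast; field_simp [hp2C]; ring]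
    rw [show (0:ℂ) - P = -P by ring, Complex.normSq_neg, Complex.normSq_mul,
      Complex.normSq_mul, Complex.normSq_ofReal, Complex.normSq_add_mul_I]
    linear_combination (p2*r^2) * ht + p2*(2*p2*r + 1) * hr
  have hq₂C : Compass q₂ := by
    refine Compass.step Compass.zero Compass.one hP Compass.zero hP0.symm hq₂abs ?_
    refine absEq ?_
    rw [show q₂ - P = P * (((2*p2)⁻¹ : ℝ) : ℂ) * (((1 - 2*p2 : ℝ):ℂ) + ((-t:ℝ):ℂ) * I) by
      rw [hq₂]; push_cast; field_simp [hp2C]; ring]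
    rw [show (0:ℂ) - P = -P by ring, Complex.normSq_neg, Complex.normSq_mul,
      Complex.normSq_mul, Complex.normSq_ofReal, Complex.normSq_add_mul_I]
    linear_combination (p2*r^2) * ht + p2*(2*p2*r + 1) * hr
  have hne : q₁ ≠ q₂ := by
    intro he
    have h' : P * (((2*p2)⁻¹ : ℝ) : ℂ) * (((2*t:ℝ):ℂ) * I) = 0 := by
      rw [hq₁, hq₂] at he; push_cast at he ⊢; linear_combination he
    rcases mul_eq_zero.1 h' with h'' | h''
    · rcases mul_eq_zero.1 h'' with h3 | h3
      · exact hP0 h3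
      · rw [Complex.ofReal_eq_zero] at h3; exact (inv_ne_zero (by positivity)) h3
    · rcases mul_eq_zero.1 h'' with h3 | h3
      · rw [Complex.ofReal_eq_zero] at h3; linarith
      · exact Complex.I_ne_zero h3
  refine Compass.step hq₁C Compass.zero hq₂C Compass.zero hne ?_ ?_
  · refine absEq ?_
    rw [show P * ((p2⁻¹ : ℝ) : ℂ) - q₁
        = P * (((2*p2)⁻¹ : ℝ) : ℂ) * (((1:ℝ):ℂ) + ((-t:ℝ):ℂ) * I) by
      rw [hq₁]; push_cast; field_simp [hp2C]; ring]
    rw [show (0:ℂ) - q₁ = -q₁ by ring, Complex.normSq_neg, hq₁, nq t, nq (-t)]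
    ring
  · refine absEq ?_
    rw [show P * ((p2⁻¹ : ℝ) : ℂ) - q₂
        = P * (((2*p2)⁻¹ : ℝ) : ℂ) * (((1:ℝ):ℂ) + ((t:ℝ):ℂ) * I) by
      rw [hq₂]; push_cast; field_simp [hp2C]; ring]
    rw [show (0:ℂ) - q₂ = -q₂ by ring, Complex.normSq_neg, hq₂, nq (-t), nq t]
    ring

lemma Compass.natMul {a : ℂ} (ha : Compass a) : ∀ n : ℕ, Compass ((n : ℂ) * a)
  | 0 => by simpa using Compass.zero
  | (n+1) => by
      have := (Compass.natMul ha n).add ha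
      push_cast
      rwa [show ((n:ℂ)+1) * a = (n:ℂ) * a + a by ring]

lemma Compass.inv {P : ℂ} (hP : Compass P) : Compass P⁻¹ := by
  by_cases h0 : P = 0
  · subst h0; simpa using Compass.zero
  have habs : 0 < ‖P‖ := by
    simpa [norm_pos_iff] using h0
  obtain ⟨n, hn⟩ := exists_nat_gt ((2 * ‖P‖)⁻¹)
  have hn0 : 0 < (n:ℝ) := lt_trans (by positivity) hn
  have hQabs : 1/2 < ‖(n:ℂ) * P‖ := by
    rw [norm_mul, Complex.norm_natCast]
    have key : (2 * ‖P‖)⁻¹ * (2 * ‖P‖) = 1 :=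
      inv_mul_cancel₀ (by positivity)
    nlinarith [key, habs, hn]
  have hQ : Compass ((n:ℂ) * P) := hP.natMul n
  have hw := hQ.inv_big hQabs
  have hw2 := hw.natMul n
  have he : (n:ℂ) * ((n:ℂ) * P * (((Complex.normSq ((n:ℂ)*P))⁻¹ : ℝ) : ℂ))
      = P * (((Complex.normSq P)⁻¹ : ℝ) : ℂ) := by
    have hns : Complex.normSq ((n:ℂ) * P) = (n:ℝ)^2 * Complex.normSq P := by
      rw [Complex.normSq_mul, Complex.normSq_natCast]
      ring
    rw [hns]
    have hP2 : Complex.normSq P ≠ 0 := by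
      simpa [Complex.normSq_eq_zero] using h0
    have hnC : ((n:ℝ):ℂ) ≠ 0 := by
      exact_mod_cast ne_of_gt hn0
    push_cast
    have hn2 : ((n:ℂ))⁻¹ * (n:ℂ) = 1 := inv_mul_cancel₀ (by exact_mod_cast ne_of_gt hn0)
    linear_combination P * ((Complex.normSq P : ℝ):ℂ)⁻¹ * ((1 - ((n:ℂ))⁻¹) + ((n:ℂ))⁻¹ * (1 + (n:ℂ))) * hn2
  rw [he] at hw2
  have := hw2.conj
  rwa [map_mul, Complex.conj_ofReal, ← Complex.inv_def] at this

lemma Compass.sq {x : ℂ} (hx : Compass x) : Compass (x ^ 2) := by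
  by_cases h0 : x = 0
  · subst h0; simpa using Compass.zero
  by_cases h1 : x = 1
  · subst h1; simpa using Compass.one
  have hx1 : Compass (x - 1) := by
    have := hx.translate Compass.one Compass.zero
    rwa [zero_sub, ← sub_eq_add_neg] at this
  have hu : Compass ((x - 1)⁻¹ + -x⁻¹) := hx1.inv.add hx.inv.neg
  have he : (x - 1)⁻¹ + -x⁻¹ = (x^2 - x)⁻¹ := by
    have hx1' : x - 1 ≠ 0 := sub_ne_zero.2 h1
    rw [show x^2 - x = x * (x-1) by ring, mul_inv]
    field_simp
    ring
  rw [he] at hu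
  have h2 : Compass (x^2 - x) := by
    have := hu.inv
    rwa [inv_inv] at this
  have := h2.add hx
  rwa [sub_add_cancel] at this

lemma Compass.mul {a b : ℂ} (ha : Compass a) (hb : Compass b) : Compass (a * b) := by
  have h1 : Compass ((a+b)^2 - a^2) := by
    have := ((ha.add hb).sq).add (ha.sq.neg)
    rwa [← sub_eq_add_neg] at this
  have h2 : Compass ((a+b)^2 - a^2 - b^2) := by
    have := h1.add (hb.sq.neg)
    rwa [← sub_eq_add_neg] at this
  have := h2.half
  rwa [show ((a+b)^2 - a^2 - b^2)/2 = a * b by ring] at this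

/-- 𝔠 is a subring of ℂ closed under complex conjugation. -/
theorem compass_subring_closed_under_conj :
    Compass 0 ∧ Compass 1 ∧
      ∀ a b : ℂ, Compass a → Compass b →
        Compass (a + b) ∧ Compass (-a) ∧ Compass (a * b) ∧
          Compass ((starRingEnd ℂ) a) := by
  refine ⟨Compass.zero, Compass.one, fun a b ha hb => ⟨ha.add hb, ha.neg, ha.mul hb, ha.conj⟩⟩
end

section
/- If a, b ∈ 𝔠 then the midpoint (a + b)/2 ∈ 𝔠. -/
/-- Two circles with distinct centers, the first of positive radius, are distinct as sets. -/
lemma Compass.circle_ne (p q : ℂ) (r s : ℝ) (hr : 0 < r) (hpq : p ≠ q) :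
    {w : ℂ | ‖w - p‖ = r} ≠ {w : ℂ | ‖w - q‖ = s} := by
  intro h
  have mem : ∀ w : ℂ, ‖w - p‖ = r → ‖w - q‖ = s := by
    intro w hw; exact (Set.ext_iff.mp h w).mp hw
  have h1 : ‖p + r - q‖ = s := by
    apply mem; simp [Complex.norm_real, abs_of_pos hr]
  have h2 : ‖p - r - q‖ = s := by
    apply mem
    have : p - (r:ℂ) - p = -r := by ring
    rw [this]
    simp [Complex.norm_real, abs_of_pos hr]
  have h3 : ‖p + r * Complex.I - q‖ = s := by
    apply mem
    have : p + (r:ℂ) * Complex.I - p = r * Complex.I := by ring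
    rw [this]
    simp [Complex.norm_real, abs_of_pos hr]
  apply hpq
  have e1 : Complex.normSq (p + r - q) = Complex.normSq (p - r - q) := by
    have := congrArg (fun x => x^2) (h1.trans h2.symm)
    simpa [Complex.sq_norm] using this
  have e2 : Complex.normSq (p + r - q) = Complex.normSq (p + r * Complex.I - q) := by
    have := congrArg (fun x => x^2) (h1.trans h3.symm)
    simpa [Complex.sq_norm] using this
  have hre : p.re - q.re = 0 := by
    simp [Complex.normSq_apply, Complex.add_re, Complex.sub_re, Complex.add_im, Complex.sub_im,
      Complex.ofReal_re, Complex.ofReal_im] at e1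
    nlinarith [hr]
  have him : p.im - q.im = 0 := by
    simp [Complex.normSq_apply, Complex.add_re, Complex.sub_re, Complex.add_im, Complex.sub_im,
      Complex.mul_re, Complex.mul_im, Complex.I_re, Complex.I_im,
      Complex.ofReal_re, Complex.ofReal_im] at e2
    nlinarith [hr, hre]
  have : p - q = 0 := by
    apply Complex.ext <;> simp [Complex.sub_re, Complex.sub_im] <;> linarith
  exact sub_eq_zero.mp this

/-- A generic construction step, in coordinates normalized so that the two
initial points are `a` and `a + d`. -/
lemma Compass.step_s9 (a d c₁ r₁ c₂ r₂ z : ℂ) (hd : d ≠ 0)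
    (h₁ : Compass (a + d * c₁)) (h₂ : Compass (a + d * r₁))
    (h₃ : Compass (a + d * c₂)) (h₄ : Compass (a + d * r₂))
    (e₁ : ‖z - c₁‖ = ‖r₁ - c₁‖)
    (e₂ : ‖z - c₂‖ = ‖r₂ - c₂‖)
    (hne : c₁ ≠ c₂) (hr : r₁ ≠ c₁) :
    Compass (a + d * z) := by
  have key : ∀ u v : ℂ, ‖(a + d * u) - (a + d * v)‖ =
      ‖d‖ * ‖u - v‖ := by
    intro u v
    rw [show (a + d * u) - (a + d * v) = d * (u - v) by ring, norm_mul]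
  apply Compass.circle_circle (a + d*c₁) (a + d*r₁) (a + d*c₂) (a + d*r₂) _ h₁ h₂ h₃ h₄
  · rw [key, key, e₁]
  · rw [key, key, e₂]
  · rw [key, key]
    apply Compass.circle_ne
    · have h1 : r₁ - c₁ ≠ 0 := sub_ne_zero.mpr hr
      have := norm_pos_iff.mpr h1
      have := norm_pos_iff.mpr hd
      positivity
    · intro h
      exact hne (mul_left_cancel₀ hd (add_left_cancel h))

lemma Compass.abs_eq_of_normSq {x y : ℂ} (h : Complex.normSq x = Complex.normSq y) :
    ‖x‖ = ‖y‖ := by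
  rw [Complex.norm_def, Complex.norm_def, h]

set_option maxHeartbeats 1000000 in
theorem compass_midpoint (a b : ℂ) (ha : Compass a) (hb : Compass b) :
    Compass ((a + b) / 2) := by
  by_cases hab : a = b
  · subst hab
    have : (a + a) / 2 = a := by ring
    rw [this]; exact ha
  · set d : ℂ := b - a with hd_def
    have hd : d ≠ 0 := sub_ne_zero.mpr (fun h => hab h.symm)
    have h3 : Real.sqrt 3 * Real.sqrt 3 = 3 := Real.mul_self_sqrt (by norm_num)
    have h15 : Real.sqrt 15 * Real.sqrt 15 = 15 := Real.mul_self_sqrt (by norm_num)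
    have h3pos : 0 < Real.sqrt 3 := Real.sqrt_pos.mpr (by norm_num)
    have h15pos : 0 < Real.sqrt 15 := Real.sqrt_pos.mpr (by norm_num)
    -- the key intermediate points, as coefficients of d relative to a
    set t1 : ℂ := ((1/2 : ℝ) : ℂ) + ((Real.sqrt 3 / 2 : ℝ) : ℂ) * Complex.I with ht1
    set t2 : ℂ := ((3/2 : ℝ) : ℂ) + ((Real.sqrt 3 / 2 : ℝ) : ℂ) * Complex.I with ht2
    set tP : ℂ := ((1/4 : ℝ) : ℂ) + ((Real.sqrt 15 / 4 : ℝ) : ℂ) * Complex.I with htP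
    set tQ : ℂ := ((1/4 : ℝ) : ℂ) - ((Real.sqrt 15 / 4 : ℝ) : ℂ) * Complex.I with htQ
    set tc : ℂ := ((2 : ℝ) : ℂ) with htc
    set tm : ℂ := ((2⁻¹ : ℝ) : ℂ) with htm
    have h0 : Compass (a + d * 0) := by rw [mul_zero, add_zero]; exact ha
    have h1 : Compass (a + d * 1) := by
      rw [mul_one, hd_def]
      have : a + (b - a) = b := by ring
      rw [this]; exact hb
    -- step 1 : t1, third vertex of an equilateral triangle on 0, 1
    have s1 : Compass (a + d * t1) := by
      apply Compass.step_s9 a d 0 1 1 0 t1 hd h0 h1 h1 h0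
      · apply Compass.abs_eq_of_normSq
        simp [ht1, Complex.normSq_apply, Complex.add_re, Complex.add_im, Complex.sub_re,
          Complex.sub_im, Complex.mul_re, Complex.mul_im, Complex.I_re, Complex.I_im,
          Complex.ofReal_re, Complex.ofReal_im, Complex.one_re, Complex.one_im]
        all_goals nlinarith [h3, h15]
      · apply Compass.abs_eq_of_normSq
        simp [ht1, Complex.normSq_apply, Complex.add_re, Complex.add_im, Complex.sub_re,
          Complex.sub_im, Complex.mul_re, Complex.mul_im, Complex.I_re, Complex.I_im,
          Complex.ofReal_re, Complex.ofReal_im, Complex.one_re, Complex.one_im]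
        all_goals nlinarith [h3, h15]
      · norm_num
      · norm_num
    have hne1 : (1 : ℂ) ≠ t1 := by
      intro h
      have him := congrArg Complex.im h
      simp [ht1, ht2, htP, htQ, htc, htm, Complex.add_im, Complex.sub_im, Complex.mul_im,
          Complex.mul_re, Complex.I_re, Complex.I_im, Complex.ofReal_re, Complex.ofReal_im,
          Complex.one_im] at him
      nlinarith [h3pos]
    have hne2 : (1 : ℂ) ≠ t2 := by
      intro h
      have him := congrArg Complex.im h
      simp [ht1, ht2, htP, htQ, htc, htm, Complex.add_im, Complex.sub_im, Complex.mul_im,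
          Complex.mul_re, Complex.I_re, Complex.I_im, Complex.ofReal_re, Complex.ofReal_im,
          Complex.one_im] at him
      nlinarith [h3pos]
    have hnec : (0 : ℂ) ≠ tc := by
      rw [htc]; norm_num
    have hneP : (0 : ℂ) ≠ tP := by
      intro h
      have him := congrArg Complex.im h
      simp [ht1, ht2, htP, htQ, htc, htm, Complex.add_im, Complex.sub_im, Complex.mul_im,
          Complex.mul_re, Complex.I_re, Complex.I_im, Complex.ofReal_re, Complex.ofReal_im,
          Complex.one_im] at him
      nlinarith [h15pos]
    have hnePQ : tP ≠ tQ := by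
      intro h
      have him := congrArg Complex.im h
      simp [ht1, ht2, htP, htQ, htc, htm, Complex.add_im, Complex.sub_im, Complex.mul_im,
          Complex.mul_re, Complex.I_re, Complex.I_im, Complex.ofReal_re, Complex.ofReal_im,
          Complex.one_im] at him
      nlinarith [h15pos]
    -- step 2 : t2
    have s2 : Compass (a + d * t2) := by
      apply Compass.step_s9 a d 1 0 t1 0 t2 hd h1 h0 s1 h0
      · apply Compass.abs_eq_of_normSq
        simp [ht1, ht2, htP, htQ, htc, htm, Complex.normSq_apply, Complex.add_re, Complex.add_im,
          Complex.sub_re, Complex.sub_im, Complex.mul_re, Complex.mul_im, Complex.I_re,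
          Complex.I_im, Complex.ofReal_re, Complex.ofReal_im, Complex.one_re, Complex.one_im]
        all_goals nlinarith [h3, h15]
      · apply Compass.abs_eq_of_normSq
        simp [ht1, ht2, htP, htQ, htc, htm, Complex.normSq_apply, Complex.add_re, Complex.add_im,
          Complex.sub_re, Complex.sub_im, Complex.mul_re, Complex.mul_im, Complex.I_re,
          Complex.I_im, Complex.ofReal_re, Complex.ofReal_im, Complex.one_re, Complex.one_im]
        all_goals nlinarith [h3, h15]
      · exact hne1
      · norm_num
    -- step 3 : tc = 2, the reflection of 0 across 1
    have sc : Compass (a + d * tc) := by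
      apply Compass.step_s9 a d 1 0 t2 1 tc hd h1 h0 s2 h1
      · apply Compass.abs_eq_of_normSq
        simp [ht1, ht2, htP, htQ, htc, htm, Complex.normSq_apply, Complex.add_re, Complex.add_im,
          Complex.sub_re, Complex.sub_im, Complex.mul_re, Complex.mul_im, Complex.I_re,
          Complex.I_im, Complex.ofReal_re, Complex.ofReal_im, Complex.one_re, Complex.one_im]
        all_goals nlinarith [h3, h15]
      · apply Compass.abs_eq_of_normSq
        simp [ht1, ht2, htP, htQ, htc, htm, Complex.normSq_apply, Complex.add_re, Complex.add_im,
          Complex.sub_re, Complex.sub_im, Complex.mul_re, Complex.mul_im, Complex.I_re,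
          Complex.I_im, Complex.ofReal_re, Complex.ofReal_im, Complex.one_re, Complex.one_im]
        all_goals nlinarith [h3, h15]
      · exact hne2
      · norm_num
    -- step 4 : tP, intersection of circle(0,1) and circle(2,2)
    have s4 : Compass (a + d * tP) := by
      apply Compass.step_s9 a d 0 1 tc 0 tP hd h0 h1 sc h0
      · apply Compass.abs_eq_of_normSq
        simp [ht1, ht2, htP, htQ, htc, htm, Complex.normSq_apply, Complex.add_re, Complex.add_im,
          Complex.sub_re, Complex.sub_im, Complex.mul_re, Complex.mul_im, Complex.I_re,
          Complex.I_im, Complex.ofReal_re, Complex.ofReal_im, Complex.one_re, Complex.one_im]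
        all_goals nlinarith [h3, h15]
      · apply Compass.abs_eq_of_normSq
        simp [ht1, ht2, htP, htQ, htc, htm, Complex.normSq_apply, Complex.add_re, Complex.add_im,
          Complex.sub_re, Complex.sub_im, Complex.mul_re, Complex.mul_im, Complex.I_re,
          Complex.I_im, Complex.ofReal_re, Complex.ofReal_im, Complex.one_re, Complex.one_im]
        all_goals nlinarith [h3, h15]
      · exact hnec
      · norm_num
    -- step 5 : tQ, the other intersection
    have s5 : Compass (a + d * tQ) := by
      apply Compass.step_s9 a d 0 1 tc 0 tQ hd h0 h1 sc h0
      · apply Compass.abs_eq_of_normSq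
        simp [ht1, ht2, htP, htQ, htc, htm, Complex.normSq_apply, Complex.add_re, Complex.add_im,
          Complex.sub_re, Complex.sub_im, Complex.mul_re, Complex.mul_im, Complex.I_re,
          Complex.I_im, Complex.ofReal_re, Complex.ofReal_im, Complex.one_re, Complex.one_im]
        all_goals nlinarith [h3, h15]
      · apply Compass.abs_eq_of_normSq
        simp [ht1, ht2, htP, htQ, htc, htm, Complex.normSq_apply, Complex.add_re, Complex.add_im,
          Complex.sub_re, Complex.sub_im, Complex.mul_re, Complex.mul_im, Complex.I_re,
          Complex.I_im, Complex.ofReal_re, Complex.ofReal_im, Complex.one_re, Complex.one_im]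
        all_goals nlinarith [h3, h15]
      · exact hnec
      · norm_num
    -- step 6 : the midpoint tm = 1/2
    have s6 : Compass (a + d * tm) := by
      apply Compass.step_s9 a d tP 0 tQ 0 tm hd s4 h0 s5 h0
      · apply Compass.abs_eq_of_normSq
        simp [ht1, ht2, htP, htQ, htc, htm, Complex.normSq_apply, Complex.add_re, Complex.add_im,
          Complex.sub_re, Complex.sub_im, Complex.mul_re, Complex.mul_im, Complex.I_re,
          Complex.I_im, Complex.ofReal_re, Complex.ofReal_im, Complex.one_re, Complex.one_im]
        all_goals nlinarith [h3, h15]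
      · apply Compass.abs_eq_of_normSq
        simp [ht1, ht2, htP, htQ, htc, htm, Complex.normSq_apply, Complex.add_re, Complex.add_im,
          Complex.sub_re, Complex.sub_im, Complex.mul_re, Complex.mul_im, Complex.I_re,
          Complex.I_im, Complex.ofReal_re, Complex.ofReal_im, Complex.one_re, Complex.one_im]
        all_goals nlinarith [h3, h15]
      · exact hnePQ
      · exact hneP
    have : a + d * tm = (a + b) / 2 := by
      rw [htm, hd_def]; push_cast; ring
    rwa [this] at s6
end
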